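/- If A is a local ring in which p lies in the maximal ideal, then W_n(A) is a local ring with maximal ideal gh_0^{-1}(𝔪_A), where gh_0 : W_n(A) → A is the zeroth ghost (projection) map. -/

import Mathlib

open WittVector

section Aux

variable {p : ℕ} [hp : Fact p.Prime] {A : Type} [CommRing A]

private lemma ghost0_eq_coeff (x : WittVector p A) :
    WittVector.ghostComponent 0 x = x.coeff 0 := by
  rw [ghostComponent_apply, wittPolynomial_zero, MvPolynomial.aeval_X]

private lemma iter_frob_mul_p (j : ℕ) (u : WittVector p A) :
    (frobenius (p := p))^[j] (u * (p : WittVector p A)) =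
      (frobenius (p := p))^[j] u * (p : WittVector p A) := by
  induction j generalizing u with
  | zero => rfl
  | succ j ih =>
      rw [Function.iterate_succ_apply, Function.iterate_succ_apply, map_mul, map_natCast, ih]

private lemma frob_iter_versch (j : ℕ) (z : WittVector p A) :
    (frobenius (p := p))^[j] ((verschiebung (p := p))^[j] z) = z * (p : WittVector p A) ^ j := by
  induction j generalizing z with
  | zero => simp
  | succ j ih =>
      calc (frobenius (p := p))^[j + 1] ((verschiebung (p := p))^[j + 1] z)
          = (frobenius (p := p))^[j]
              (frobenius ((verschiebung (p := p)) ((verschiebung (p := p))^[j] z))) := by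
            rw [Function.iterate_succ_apply (frobenius (p := p)),
              Function.iterate_succ_apply' (verschiebung (p := p))]
        _ = (frobenius (p := p))^[j] ((verschiebung (p := p))^[j] z * (p : WittVector p A)) := by
            rw [frobenius_verschiebung]
        _ = z * (p : WittVector p A) ^ j * (p : WittVector p A) := by
            rw [iter_frob_mul_p, ih]
        _ = z * (p : WittVector p A) ^ (j + 1) := by rw [mul_assoc, ← pow_succ]

private lemma iter_versch_add (j : ℕ) (a b : WittVector p A) :
    (verschiebung (p := p))^[j] (a + b) =
      (verschiebung (p := p))^[j] a + (verschiebung (p := p))^[j] b := by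
  induction j generalizing a b with
  | zero => rfl
  | succ j ih =>
      rw [Function.iterate_succ_apply, Function.iterate_succ_apply,
        Function.iterate_succ_apply, map_add WittVector.verschiebung a b, ih]

private lemma iter_versch_coeff_lt (j i : ℕ) (z : WittVector p A) (h : i < j) :
    ((verschiebung (p := p))^[j] z).coeff i = 0 := by
  induction j generalizing i with
  | zero => omega
  | succ j ih =>
      rw [Function.iterate_succ_apply']
      cases i with
      | zero => exact verschiebung_coeff_zero _
      | succ i => rw [verschiebung_coeff_succ]; exact ih _ (by omega)

variable [IsLocalRing A]

private lemma one_add_mem_isUnit {m : A} (hm : m ∈ IsLocalRing.maximalIdeal A) :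
    IsUnit (1 + m) := by
  by_contra h
  have h1 : (1 + m) ∈ IsLocalRing.maximalIdeal A := h
  have : (1 : A) ∈ IsLocalRing.maximalIdeal A := by
    have := Ideal.sub_mem _ h1 hm
    simpa using this
  exact (IsLocalRing.maximalIdeal.isMaximal A).ne_top (Ideal.eq_top_of_isUnit_mem _ this isUnit_one)

private lemma key_unit (hpm : (p : A) ∈ IsLocalRing.maximalIdeal A) :
    ∀ (k : ℕ) (x : WittVector p A), IsUnit (x.coeff 0) →
      IsUnit (WittVector.truncate (p := p) (k + 1) x) := by
  intro k
  induction k with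
  | zero =>
      intro x hx
      have hxt : WittVector.truncate (p := p) 1 x =
          WittVector.truncate (p := p) 1 (teichmuller p (x.coeff 0)) := by
        apply TruncatedWittVector.ext
        intro i
        rw [WittVector.coeff_truncate, WittVector.coeff_truncate]
        have : (i : ℕ) = 0 := by omega
        rw [this, teichmuller_coeff_zero]
      rw [hxt]
      exact hx.map ((WittVector.truncate (p := p) 1).toMonoidHom.comp (teichmuller p))
  | succ k ih =>
      intro x hx
      obtain ⟨vb, hvb⟩ := (ih x hx).exists_right_inv
      obtain ⟨v, rfl⟩ := WittVector.truncate_surjective p (k + 1) A vb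
      set w : WittVector p A := x * v - 1 with hw
      have hwker : ∀ i < k + 1, w.coeff i = 0 := by
        rw [← WittVector.mem_ker_truncate]
        simp only [RingHom.mem_ker, hw, map_sub, map_mul, map_one, hvb, sub_self]
      set a : WittVector p A := w.shift (k + 1) with ha
      have hwa : w = (verschiebung (p := p))^[k + 1] a :=
        WittVector.eq_iterate_verschiebung hwker
      -- choose the correcting coefficient
      have hu : IsUnit (1 + (p : A) ^ (k + 1) * a.coeff 0) := by
        apply one_add_mem_isUnit
        exact Ideal.mul_mem_right _ _ (Ideal.pow_mem_of_mem _ hpm _ (Nat.succ_pos _))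
      set c : A := -(a.coeff 0) * ↑hu.unit⁻¹ with hc
      set b : WittVector p A := teichmuller p c with hb
      -- the product identity in 𝕎 A
      have hmul : (verschiebung (p := p))^[k + 1] a * (verschiebung (p := p))^[k + 1] b =
          (verschiebung (p := p))^[k + 1] (a * (b * (p : WittVector p A) ^ (k + 1))) := by
        rw [iterate_verschiebung_mul_left, frob_iter_versch]
      set s : WittVector p A := a + (b + a * (b * (p : WittVector p A) ^ (k + 1))) with hs
      have hprod : (1 + (verschiebung (p := p))^[k + 1] a) *
          (1 + (verschiebung (p := p))^[k + 1] b) =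
          1 + (verschiebung (p := p))^[k + 1] s := by
        rw [hs, iter_versch_add, iter_versch_add, ← hmul]
        ring
      have hs0 : s.coeff 0 = 0 := by
        have g := WittVector.ghostComponent (p := p) (R := A) 0
        have hg : ∀ z : WittVector p A, WittVector.ghostComponent 0 z = z.coeff 0 :=
          ghost0_eq_coeff
        have hbc : b.coeff 0 = c := teichmuller_coeff_zero p c
        have : s.coeff 0 = a.coeff 0 + (c + a.coeff 0 * (c * (p : A) ^ (k + 1))) := by
          rw [← hg, hs, map_add, map_add, map_mul, map_mul, map_pow, map_natCast]
          simp only [hg, hbc]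
        rw [this, hc]
        have hinv : (↑hu.unit⁻¹ : A) * (1 + (p : A) ^ (k + 1) * a.coeff 0) = 1 := by
          have := hu.val_inv_mul
          simpa using this
        have expand : a.coeff 0 + (-(a.coeff 0) * ↑hu.unit⁻¹ +
            a.coeff 0 * (-(a.coeff 0) * ↑hu.unit⁻¹ * (p : A) ^ (k + 1))) =
            a.coeff 0 - a.coeff 0 * (↑hu.unit⁻¹ * (1 + (p : A) ^ (k + 1) * a.coeff 0)) := by
          ring
        rw [expand, hinv, mul_one, sub_self]
      have htrunc0 : WittVector.truncate (p := p) (k + 2)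
          ((verschiebung (p := p))^[k + 1] s) = 0 := by
        have : (verschiebung (p := p))^[k + 1] s ∈
            RingHom.ker (WittVector.truncate (p := p) (k + 2)) := by
          rw [WittVector.mem_ker_truncate]
          intro i hi
          rcases Nat.lt_or_ge i (k + 1) with h | h
          · exact iter_versch_coeff_lt _ _ _ h
          · have : i = k + 1 := by omega
            subst this
            have := iterate_verschiebung_coeff (p := p) s (k + 1) 0
            simpa [hs0] using this
        exact this
      apply IsUnit.of_mul_eq_one
        (WittVector.truncate (p := p) (k + 2) (v * (1 + (verschiebung (p := p))^[k + 1] b)))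
      have hxva : x * v = 1 + (verschiebung (p := p))^[k + 1] a := by
        rw [← hwa, hw]; ring
      calc WittVector.truncate (p := p) (k + 2) x *
            WittVector.truncate (p := p) (k + 2) (v * (1 + (verschiebung (p := p))^[k + 1] b))
          = WittVector.truncate (p := p) (k + 2)
              ((x * v) * (1 + (verschiebung (p := p))^[k + 1] b)) := by
            simp only [map_mul]; ring
        _ = WittVector.truncate (p := p) (k + 2)
              (1 + (verschiebung (p := p))^[k + 1] s) := by rw [hxva, hprod]
        _ = 1 := by rw [map_add, map_one, htrunc0, add_zero]

end Aux

/-- If `A` is a local ring in which `p` lies in the maximal ideal, then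
`W_n(A)` is a local ring with maximal ideal `gh_0⁻¹(𝔪_A)`, where `gh_0 : W_n(A) → A` is the
zeroth ghost (projection) map. (Normalized indexing: `W_n = TruncatedWittVector p (n+1)`;
`gh_0` is characterized via the truncation map by the zeroth ghost component of `W(A)`.) -/
theorem witt_of_local_is_local (p : ℕ) [Fact p.Prime] (n : ℕ)
    (A : Type) [CommRing A] [IsLocalRing A]
    (hp : (p : A) ∈ IsLocalRing.maximalIdeal A)
    (g0 : TruncatedWittVector p (n + 1) A →+* A)
    (hg0 : ∀ x : WittVector p A,
      g0 (WittVector.truncate (n + 1) x) = WittVector.ghostComponent 0 x) :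
    ∃ h : IsLocalRing (TruncatedWittVector p (n + 1) A),
      @IsLocalRing.maximalIdeal (TruncatedWittVector p (n + 1) A) _ h =
        Ideal.comap g0 (IsLocalRing.maximalIdeal A) := by
  -- g0 is evaluation of the zeroth coefficient
  have hg0' : ∀ y : TruncatedWittVector p (n + 1) A, g0 y = y.coeff 0 := by
    intro y
    obtain ⟨x, rfl⟩ := WittVector.truncate_surjective p (n + 1) A y
    rw [hg0, ghost0_eq_coeff, WittVector.coeff_truncate]
    rfl
  -- characterization of units
  have key : ∀ y : TruncatedWittVector p (n + 1) A,
      IsUnit y ↔ g0 y ∉ IsLocalRing.maximalIdeal A := by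
    intro y
    constructor
    · intro hy hmem
      exact IsLocalRing.mem_maximalIdeal (g0 y) |>.mp hmem (hy.map g0)
    · intro hmem
      obtain ⟨x, rfl⟩ := WittVector.truncate_surjective p (n + 1) A y
      have : IsUnit (x.coeff 0) := by
        by_contra h
        exact hmem (by rw [hg0, ghost0_eq_coeff]; exact IsLocalRing.mem_maximalIdeal _ |>.mpr h)
      exact key_unit hp n x this
  have : Nontrivial (TruncatedWittVector p (n + 1) A) := by
    refine ⟨0, 1, fun h => ?_⟩
    have := congrArg g0 h
    rw [map_zero, map_one] at this
    exact zero_ne_one this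
  have hloc : IsLocalRing (TruncatedWittVector p (n + 1) A) := by
    apply IsLocalRing.of_nonunits_add
    intro a b ha hb
    intro hab
    have hga : g0 a ∈ IsLocalRing.maximalIdeal A := by
      by_contra h; exact ha ((key a).mpr h)
    have hgb : g0 b ∈ IsLocalRing.maximalIdeal A := by
      by_contra h; exact hb ((key b).mpr h)
    have := (key (a + b)).mp hab
    rw [map_add] at this
    exact this (Ideal.add_mem _ hga hgb)
  refine ⟨hloc, ?_⟩
  ext y
  rw [Ideal.mem_comap]
  constructor
  · intro hy
    by_contra h
    exact (IsLocalRing.mem_maximalIdeal y).mp hy ((key y).mpr h)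
  · intro hy
    exact (IsLocalRing.mem_maximalIdeal y).mpr (fun hu => ((key y).mp hu) hy)
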